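/- If g : (0,∞) → ℝ is twice differentiable and satisfies g(t) g''(t) (t² g''(t) − (2/3) t g'(t) + (4/9) g(t)) = 1 for all t > 0, then g̃(t) := t^{4/3} g(1/t) also satisfies the same ODE on (0,∞). -/

import Mathlib

theorem ode_reflection_symmetry (g : ℝ → ℝ)
    (hg1 : ∀ t > (0:ℝ), DifferentiableAt ℝ g t)
    (hg2 : ∀ t > (0:ℝ), DifferentiableAt ℝ (deriv g) t)
    (hode : ∀ t > (0:ℝ), g t * deriv (deriv g) t *
      (t ^ 2 * deriv (deriv g) t - (2/3) * t * deriv g t + (4/9) * g t) = 1) :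
    ∀ t > (0:ℝ),
      (fun s => s ^ ((4:ℝ)/3) * g (1/s)) t *
        deriv (deriv (fun s => s ^ ((4:ℝ)/3) * g (1/s))) t *
        (t ^ 2 * deriv (deriv (fun s => s ^ ((4:ℝ)/3) * g (1/s))) t -
          (2/3) * t * deriv (fun s => s ^ ((4:ℝ)/3) * g (1/s)) t +
          (4/9) * (fun s => s ^ ((4:ℝ)/3) * g (1/s)) t) = 1 := by
  have hinv : ∀ t : ℝ, 0 < t → HasDerivAt (fun s : ℝ => 1/s) (-(1/t^2)) t := by
    intro t ht
    simpa [one_div] using hasDerivAt_inv ht.ne'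
  have hgc : ∀ t : ℝ, 0 < t →
      HasDerivAt (fun s => g (1/s)) (deriv g (1/t) * (-(1/t^2))) t := by
    intro t ht
    exact ((hg1 (1/t) (by positivity)).hasDerivAt).comp t (hinv t ht)
  have hg'c : ∀ t : ℝ, 0 < t →
      HasDerivAt (fun s => deriv g (1/s)) (deriv (deriv g) (1/t) * (-(1/t^2))) t := by
    intro t ht
    exact ((hg2 (1/t) (by positivity)).hasDerivAt).comp t (hinv t ht)
  have hG1 : ∀ t : ℝ, 0 < t →
      HasDerivAt (fun s => s ^ ((4:ℝ)/3) * g (1/s))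
        ((4:ℝ)/3 * t ^ ((4:ℝ)/3 - 1) * g (1/t)
          + t ^ ((4:ℝ)/3) * (deriv g (1/t) * (-(1/t^2)))) t := by
    intro t ht
    exact (Real.hasDerivAt_rpow_const (Or.inl ht.ne')).mul (hgc t ht)
  have hD1 : ∀ t : ℝ, 0 < t →
      deriv (fun s => s ^ ((4:ℝ)/3) * g (1/s)) t
        = (4:ℝ)/3 * t ^ ((4:ℝ)/3 - 1) * g (1/t)
          + t ^ ((4:ℝ)/3) * (deriv g (1/t) * (-(1/t^2))) := fun t ht => (hG1 t ht).deriv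
  have hsq : ∀ t : ℝ, 0 < t → HasDerivAt (fun s : ℝ => -(1/s^2)) (2/t^3) t := by
    intro t ht
    have h := (((hasDerivAt_pow 2 t).inv (pow_ne_zero 2 ht.ne')).neg)
    have ht' : t ≠ 0 := ht.ne'
    convert h using 1
    · rfl
    · rfl
    · funext s; rw [one_div]; rfl
    · push_cast
      norm_num
      rw [neg_div, neg_neg,
        div_eq_div_iff (by positivity) (by positivity : ((t:ℝ)^2)^2 ≠ 0)]
      ring
  have hF : ∀ t : ℝ, 0 < t →
      HasDerivAt (fun s => (4:ℝ)/3 * s ^ ((4:ℝ)/3 - 1) * g (1/s)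
          + s ^ ((4:ℝ)/3) * (deriv g (1/s) * (-(1/s^2))))
        (t ^ ((4:ℝ)/3 - 2) * ((4/9) * g (1/t) - (2/3) / t * deriv g (1/t)
          + 1/t^2 * deriv (deriv g) (1/t))) t := by
    intro t ht
    have hA : HasDerivAt (fun s : ℝ => (4:ℝ)/3 * s ^ ((4:ℝ)/3 - 1))
        ((4:ℝ)/3 * (((4:ℝ)/3 - 1) * t ^ ((4:ℝ)/3 - 1 - 1))) t :=
      (Real.hasDerivAt_rpow_const (Or.inl ht.ne')).const_mul _
    have hC : HasDerivAt (fun s => deriv g (1/s) * (-(1/s^2)))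
        (deriv (deriv g) (1/t) * (-(1/t^2)) * (-(1/t^2)) + deriv g (1/t) * (2/t^3)) t :=
      (hg'c t ht).mul (hsq t ht)
    have h := (hA.mul (hgc t ht)).add
      ((Real.hasDerivAt_rpow_const (p := (4:ℝ)/3) (Or.inl ht.ne')).mul hC)
    convert h using 1
    · rfl
    · rfl
    · rfl
    have e1 : t ^ ((4:ℝ)/3 - 1 - 1) = t ^ ((4:ℝ)/3 - 2) := by norm_num
    have e2 : t ^ ((4:ℝ)/3 - 1) = t ^ ((4:ℝ)/3 - 2) * t := by
      rw [show ((4:ℝ)/3 - 1) = (4/3-2)+1 by ring, Real.rpow_add ht, Real.rpow_one]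
    have e3 : t ^ ((4:ℝ)/3) = t ^ ((4:ℝ)/3 - 2) * t^2 := by
      rw [show ((4:ℝ)/3) = (4/3-2)+2 by ring, Real.rpow_add ht]
      norm_num [Real.rpow_natCast]
    rw [e1, e2, e3]
    field_simp
    ring
  have hD2 : ∀ t : ℝ, 0 < t →
      deriv (deriv (fun s => s ^ ((4:ℝ)/3) * g (1/s))) t
        = t ^ ((4:ℝ)/3 - 2) * ((4/9) * g (1/t) - (2/3) / t * deriv g (1/t)
          + 1/t^2 * deriv (deriv g) (1/t)) := by
    intro t ht
    have hev : deriv (fun s => s ^ ((4:ℝ)/3) * g (1/s))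
        =ᶠ[nhds t] (fun s => (4:ℝ)/3 * s ^ ((4:ℝ)/3 - 1) * g (1/s)
          + s ^ ((4:ℝ)/3) * (deriv g (1/s) * (-(1/s^2)))) := by
      filter_upwards [IsOpen.mem_nhds isOpen_Ioi ht] with s hs
      exact hD1 s hs
    rw [hev.deriv_eq]
    exact (hF t ht).deriv
  intro t ht
  simp only
  rw [hD1 t ht, hD2 t ht]
  have h := hode (1/t) (by positivity)
  set a := g (1/t) with ha
  set b := deriv g (1/t) with hb
  set c := deriv (deriv g) (1/t) with hc
  set Y := t ^ ((1:ℝ)/3) with hY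
  have hY0 : Y ≠ 0 := by positivity
  have e2 : t ^ ((4:ℝ)/3 - 1) = Y := by norm_num [hY]
  have e3 : t ^ ((4:ℝ)/3) = Y ^ 4 := by
    rw [hY, ← Real.rpow_natCast (t ^ ((1:ℝ)/3)) 4, ← Real.rpow_mul ht.le]
    norm_num
  have eX : t ^ ((4:ℝ)/3 - 2) = (Y ^ 2)⁻¹ := by
    rw [hY, show ((4:ℝ)/3 - 2) = ((1:ℝ)/3) * (-2) by ring, Real.rpow_mul ht.le,
      Real.rpow_neg (by positivity),
      show ((2:ℝ)) = ((2:ℕ):ℝ) by norm_num, Real.rpow_natCast]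
  have htY : t = Y ^ 3 := by
    rw [hY, ← Real.rpow_natCast (t ^ ((1:ℝ)/3)) 3, ← Real.rpow_mul ht.le]
    norm_num
  rw [e2, e3, eX]
  rw [htY] at h ⊢
  field_simp at h ⊢
  linear_combination 81 * h
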